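/- Closed form of the conjugate of the max-min regularizer on the feasible region. Suppose μ ∈ ℝ^P satisfies ∑_{p∈S} γ_p μ_p ≥ −λ for every subset S ⊆ P. Then r*(−μ) = μᵀγ/λ + 1, and the supremum defining r*(−μ) is attained at e = γ. -/
import Mathlib


open Finset

/-- Closed form of the conjugate of the max-min regularizer on the feasible region:
if `∑_{p∈S} γ_p μ_p ≥ -λ` for every subset `S ⊆ P`, then the supremum defining
`r*(-μ)` is attained at `e = γ` and `r*(-μ) = μᵀγ/λ + 1`. -/
theorem conjugate_maxmin_closed_form
    {P : Type*} [Fintype P] [Nonempty P]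
    (lam : ℝ) (hlam : 0 < lam)
    (γ : P → ℝ) (hγ : ∀ p, 0 < γ p)
    (μ : P → ℝ)
    (hfeas : ∀ S : Finset P, -lam ≤ ∑ p ∈ S, γ p * μ p) :
    IsGreatest {w : ℝ | ∃ e : P → ℝ, (∀ p, e p ≤ γ p) ∧
        w = (Finset.univ.inf' Finset.univ_nonempty fun p => e p / γ p)
          + (∑ p, μ p * e p) / lam}
      ((Finset.univ.inf' Finset.univ_nonempty fun p => γ p / γ p)
        + (∑ p, μ p * γ p) / lam)
    ∧ (Finset.univ.inf' Finset.univ_nonempty fun p => γ p / γ p)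
        + (∑ p, μ p * γ p) / lam
      = (∑ p, μ p * γ p) / lam + 1 := by
  have h1 : (Finset.univ.inf' Finset.univ_nonempty fun p : P => γ p / γ p) = 1 := by
    rw [Finset.inf'_congr Finset.univ_nonempty rfl (fun p _ => div_self (hγ p).ne')]
    exact Finset.inf'_const _ _
  refine ⟨⟨⟨γ, fun p => le_refl _, rfl⟩, ?_⟩, by rw [h1]; ring⟩
  rintro w ⟨e, he, rfl⟩
  set m := Finset.univ.inf' Finset.univ_nonempty (fun p => e p / γ p) with hm
  have hmle : ∀ p, m * γ p ≤ e p := fun p => by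
    have := Finset.inf'_le (fun p => e p / γ p) (Finset.mem_univ p)
    exact (le_div_iff₀ (hγ p)).mp this
  have hm1 : m ≤ 1 := by
    obtain ⟨p⟩ := ‹Nonempty P›
    calc m ≤ e p / γ p := Finset.inf'_le _ (Finset.mem_univ p)
      _ ≤ 1 := by rw [div_le_one (hγ p)]; exact he p
  rw [h1]
  set S := Finset.univ.filter (fun p : P => μ p < 0) with hS
  have key : ∑ p, μ p * e p - ∑ p, μ p * γ p ≤ (1 - m) * lam := by
    rw [← Finset.sum_sub_distrib]
    have hsplit := Finset.sum_filter_add_sum_filter_not Finset.univ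
      (fun p : P => μ p < 0) (fun p => μ p * e p - μ p * γ p)
    have h2 : ∑ p ∈ Finset.univ.filter (fun p : P => ¬ μ p < 0),
        (μ p * e p - μ p * γ p) ≤ 0 := by
      apply Finset.sum_nonpos
      intro p hp
      simp only [Finset.mem_filter, not_lt] at hp
      have := he p
      nlinarith [hp.2]
    have h3 : ∑ p ∈ S, (μ p * e p - μ p * γ p) ≤ (1 - m) * lam := by
      calc ∑ p ∈ S, (μ p * e p - μ p * γ p)
          ≤ ∑ p ∈ S, (1 - m) * (-(γ p * μ p)) := by
            apply Finset.sum_le_sum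
            intro p hp
            simp only [hS, Finset.mem_filter] at hp
            have h4 := hmle p
            nlinarith [hp.2, hγ p]
        _ = (1 - m) * (-(∑ p ∈ S, γ p * μ p)) := by
            rw [← Finset.mul_sum, Finset.sum_neg_distrib]
        _ ≤ (1 - m) * lam := by
            apply mul_le_mul_of_nonneg_left _ (by linarith)
            have := hfeas S
            linarith
    linarith [hsplit, h2, h3]
  have hdiv : (∑ p, μ p * e p) / lam - (∑ p, μ p * γ p) / lam ≤ 1 - m := by
    rw [div_sub_div_same, div_le_iff₀ hlam]
    exact key
  linarith
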